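/- Every q-ary code C ⊆ Σ_q^n that can uniquely reconstruct codewords from any N distinct elements of the t-insertion ball also has this property for the t-deletion ball: if for all distinct x, y ∈ C we have |I_t(x) ∩ I_t(y)| < N, then for all distinct x, y ∈ C we have |D_t(x) ∩ D_t(y)| < N. -/

import Mathlib

/-- The t-deletion ball: length-(|x|-t) subsequences of x. -/
def dBall {α : Type*} (t : ℕ) (x : List α) : Set (List α) :=
  {z | z.Sublist x ∧ z.length + t = x.length}

/-- The t-insertion ball: length-(|x|+t) supersequences of x. -/
def iBall {α : Type*} (t : ℕ) (x : List α) : Set (List α) :=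
  {z | x.Sublist z ∧ z.length = x.length + t}

namespace SCSAux

variable {α : Type*} [DecidableEq α]

/-- canonical shortest common supersequence of `x` and `y` along a common
subsequence `z`. -/
def scs : List α → List α → List α → List α
  | x, y, [] => x ++ y
  | x, y, c :: z => x.takeWhile (· ≠ c) ++ y.takeWhile (· ≠ c) ++
      c :: scs ((x.dropWhile (· ≠ c)).tail) ((y.dropWhile (· ≠ c)).tail) z

def pre (c : α) (l : List α) : List α := l.takeWhile (· ≠ c)
def suf (c : α) (l : List α) : List α := (l.dropWhile (· ≠ c)).tail

lemma scs_nil (x y : List α) : scs x y [] = x ++ y := rfl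

lemma scs_cons (x y : List α) (c : α) (z : List α) :
    scs x y (c :: z) = pre c x ++ pre c y ++ c :: scs (suf c x) (suf c y) z := rfl

lemma not_mem_pre (c : α) (l : List α) : c ∉ pre c l := by
  intro h
  have := List.mem_takeWhile_imp h
  simp at this

lemma ne_of_mem_pre {c a : α} {l : List α} (h : a ∈ pre c l) : a ≠ c := by
  have := List.mem_takeWhile_imp h
  simpa using this

lemma dropWhile_eq_cons {c : α} {l : List α} (h : c ∈ l) :
    l.dropWhile (· ≠ c) = c :: suf c l := by
  induction l with
  | nil => simp at h
  | cons a l ih =>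
    by_cases hac : a = c
    · subst hac
      rw [suf, List.dropWhile_cons, if_neg (by simp)]
      rfl
    · have hc : c ∈ l := by
        rcases List.mem_cons.1 h with h' | h'
        · exact absurd h'.symm hac
        · exact h'
      have hstep : (a :: l).dropWhile (· ≠ c) = l.dropWhile (· ≠ c) := by
        rw [List.dropWhile_cons, if_pos (by simp [hac])]
      rw [suf, hstep, ih hc]
      rfl

lemma pre_spec {c : α} {l : List α} (h : c ∈ l) :
    l = pre c l ++ c :: suf c l := by
  conv_lhs => rw [← List.takeWhile_append_dropWhile (p := (· ≠ c)) (l := l)]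
  rw [dropWhile_eq_cons h]
  rfl

lemma sublist_suf {c : α} {z l : List α} (h : (c :: z).Sublist l) :
    z.Sublist (suf c l) := by
  induction l with
  | nil => cases h
  | cons a l ih =>
    by_cases hac : a = c
    · subst hac
      have hsuf : suf a (a :: l) = l := by simp [suf, List.dropWhile_cons]
      rw [hsuf]
      cases h with
      | cons _ h' => exact (z.sublist_cons_self a).trans h'
      | cons_cons _ h' => exact h'
    · have hsuf : suf c (a :: l) = suf c l := by
        simp [suf, List.dropWhile_cons, hac]
      rw [hsuf]
      cases h with
      | cons _ h' => exact ih h'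
      | cons_cons _ h' => exact absurd rfl hac

lemma cons_sublist_of_ne {c d : α} {z l : List α} (h : (c :: z).Sublist (d :: l))
    (hne : c ≠ d) : (c :: z).Sublist l := by
  cases h with
  | cons _ h' => exact h'
  | cons_cons _ h' => exact absurd rfl hne

lemma sublist_of_notMem_left {a : α} {z A B : List α} (h : (a :: z).Sublist (A ++ B))
    (ha : a ∉ A) : (a :: z).Sublist B := by
  induction A with
  | nil => exact h
  | cons x A ih =>
    have hax : a ≠ x := fun e => ha (by simp [e])
    have := cons_sublist_of_ne h hax
    exact ih this (fun e => ha (by simp [e]))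

lemma takeWhile_append_all {p : α → Bool} {A B : List α} (h : ∀ a ∈ A, p a) :
    (A ++ B).takeWhile p = A ++ B.takeWhile p := by
  induction A with
  | nil => simp
  | cons a A ih =>
    rw [List.cons_append, List.takeWhile_cons, if_pos (h a (by simp)),
      ih (fun a ha => h a (by simp [ha])), List.cons_append]

lemma dropWhile_append_all {p : α → Bool} {A B : List α} (h : ∀ a ∈ A, p a) :
    (A ++ B).dropWhile p = B.dropWhile p := by
  induction A with
  | nil => simp
  | cons a A ih =>
    rw [List.cons_append, List.dropWhile_cons, if_pos (h a (by simp))]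
    exact ih (fun a ha => h a (by simp [ha]))

/-- unique decomposition at the first occurrence. -/
lemma firstocc {e : α} {A B A' B' : List α} (h : A ++ e :: B = A' ++ e :: B')
    (hA : e ∉ A) (hA' : e ∉ A') : A = A' ∧ B = B' := by
  induction A generalizing A' with
  | nil =>
    cases A' with
    | nil => simpa using h
    | cons a A' =>
      simp only [List.nil_append, List.cons_append, List.cons.injEq] at h
      exact absurd h.1 (fun e' => hA' (by simp [e'.symm]))
  | cons a A ih =>
    cases A' with
    | nil =>
      simp only [List.cons_append, List.nil_append, List.cons.injEq] at h
      exact absurd h.1 (fun e' => hA (by simp [e']))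
    | cons a' A' =>
      simp only [List.cons_append, List.cons.injEq] at h
      obtain ⟨h1, h2⟩ := h
      have := ih h2 (fun hm => hA (by simp [hm])) (fun hm => hA' (by simp [hm]))
      exact ⟨by rw [h1, this.1], this.2⟩

lemma scs_length : ∀ {z x y : List α}, z.Sublist x → z.Sublist y →
    (scs x y z).length + z.length = x.length + y.length := by
  intro z
  induction z with
  | nil => intro x y _ _; simp [scs_nil]
  | cons c z ih =>
    intro x y hx hy
    have hcx : c ∈ x := hx.subset (by simp)
    have hcy : c ∈ y := hy.subset (by simp)
    have h1 := ih (sublist_suf hx) (sublist_suf hy)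
    have h2 : x.length = (pre c x).length + 1 + (suf c x).length := by
      conv_lhs => rw [pre_spec hcx]
      simp; omega
    have h3 : y.length = (pre c y).length + 1 + (suf c y).length := by
      conv_lhs => rw [pre_spec hcy]
      simp; omega
    rw [scs_cons]
    simp only [List.length_append, List.length_cons]
    omega

lemma sublist_scs : ∀ {z x y : List α}, z.Sublist x → z.Sublist y →
    x.Sublist (scs x y z) ∧ y.Sublist (scs x y z) := by
  intro z
  induction z with
  | nil => intro x y _ _; exact ⟨List.sublist_append_left x y, List.sublist_append_right x y⟩
  | cons c z ih =>
    intro x y hx hy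
    have hcx : c ∈ x := hx.subset (by simp)
    have hcy : c ∈ y := hy.subset (by simp)
    obtain ⟨ihx, ihy⟩ := ih (sublist_suf hx) (sublist_suf hy)
    rw [scs_cons, List.append_assoc]
    constructor
    · conv_lhs => rw [pre_spec hcx]
      refine (List.Sublist.append_left ?_ (pre c x))
      refine List.Sublist.trans ?_ (List.sublist_append_right (pre c y) _)
      exact ihx.cons₂ c
    · conv_lhs => rw [pre_spec hcy]
      refine List.Sublist.trans ?_ (List.sublist_append_right (pre c x) _)
      refine (List.Sublist.append_left ?_ (pre c y))
      exact ihy.cons₂ c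

lemma pre_cons_ne {d a : α} (h : a ≠ d) (l : List α) : pre d (a :: l) = a :: pre d l := by
  rw [pre, List.takeWhile_cons, if_pos (by simp [h])]; rfl

lemma suf_cons_ne {d a : α} (h : a ≠ d) (l : List α) : suf d (a :: l) = suf d l := by
  rw [suf, List.dropWhile_cons, if_pos (by simp [h])]; rfl

lemma pre_append_of_notMem {d : α} {A : List α} (h : d ∉ A) (L : List α) :
    pre d (A ++ L) = A ++ pre d L :=
  takeWhile_append_all (fun a ha => by simp; exact fun e => h (e ▸ ha))

lemma suf_append_of_notMem {d : α} {A : List α} (h : d ∉ A) (L : List α) :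
    suf d (A ++ L) = suf d L := by
  rw [suf, dropWhile_append_all (fun a ha => by simp; exact fun e => h (e ▸ ha))]; rfl

lemma pre_of_decomp {d : α} {X A B : List α} (h : X = A ++ d :: B) (hdA : d ∉ A) :
    pre d X = A ∧ suf d X = B := by
  subst h
  constructor
  · rw [pre_append_of_notMem hdA, pre, List.takeWhile_cons, if_neg (by simp), List.append_nil]
  · rw [suf_append_of_notMem hdA, suf, List.dropWhile_cons, if_neg (by simp)]
    rfl

lemma master_nil {X Y Z2 u : List α} {d : α}
    (h2x : (d :: Z2).Sublist X) (h2y : (d :: Z2).Sublist Y) (hu : d ∉ u)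
    (heq : scs X Y [] = pre d X ++ u ++ pre d Y ++ d :: scs (suf d X) (suf d Y) Z2) :
    False := by
  have hdX : d ∈ X := h2x.subset (by simp)
  have hdY : d ∈ Y := h2y.subset (by simp)
  have key : pre d X ++ d :: (suf d X ++ Y)
      = (pre d X ++ u ++ pre d Y) ++ d :: scs (suf d X) (suf d Y) Z2 := by
    rw [scs_nil] at heq
    calc pre d X ++ d :: (suf d X ++ Y) = X ++ Y := by
          conv_rhs => rw [pre_spec hdX]
          simp
      _ = _ := heq
  obtain ⟨h1, h2⟩ := firstocc key (not_mem_pre d X) (by simp [not_mem_pre, hu])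
  have l1 := congrArg List.length h1
  simp only [List.length_append] at l1
  have hpY : pre d Y = [] := List.length_eq_zero_iff.mp (by omega)
  have hY := pre_spec hdY
  rw [hpY] at hY
  simp only [List.nil_append] at hY
  have hlen := scs_length (sublist_suf h2x) (sublist_suf h2y)
  have l2 := congrArg List.length h2
  simp only [List.length_append] at l2
  have l3 := congrArg List.length hY
  simp only [List.length_cons] at l3
  omega

lemma master : ∀ (k : ℕ) (X Y Z1 Z2 u : List α) (d : α),
    Z1.length ≤ k → Z1.Sublist X → Z1.Sublist Y →
    (d :: Z2).Sublist X → (d :: Z2).Sublist Y → d ∉ u →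
    scs X Y Z1 = pre d X ++ u ++ pre d Y ++ d :: scs (suf d X) (suf d Y) Z2 →
    u = [] ∧ Z1 = d :: Z2 := by
  intro k
  induction k with
  | zero =>
    intro X Y Z1 Z2 u d hk h1x h1y h2x h2y hu heq
    have hZ1 : Z1 = [] := List.length_eq_zero_iff.mp (by omega)
    subst hZ1
    exact (master_nil h2x h2y hu heq).elim
  | succ k ih =>
    intro X Y Z1 Z2 u d hk h1x h1y h2x h2y hu heq
    cases Z1 with
    | nil => exact (master_nil h2x h2y hu heq).elim
    | cons c Z1' =>
      have hk' : Z1'.length ≤ k := by simp only [List.length_cons] at hk; omega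
      have hcX : c ∈ X := h1x.subset (by simp)
      have hcY : c ∈ Y := h1y.subset (by simp)
      have hdX : d ∈ X := h2x.subset (by simp)
      have hdY : d ∈ Y := h2y.subset (by simp)
      rw [scs_cons] at heq
      -- length bookkeeping
      have hlen1 := scs_length (sublist_suf h1x) (sublist_suf h1y)
      have hlen2 := scs_length (sublist_suf h2x) (sublist_suf h2y)
      have hlx := congrArg List.length (pre_spec hcX)
      have hly := congrArg List.length (pre_spec hcY)
      have hlxd := congrArg List.length (pre_spec hdX)
      have hlyd := congrArg List.length (pre_spec hdY)
      simp only [List.length_append, List.length_cons] at hlx hly hlxd hlyd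
      have hleq := congrArg List.length heq
      simp only [List.length_append, List.length_cons] at hleq
      by_cases hcd : c = d
      · -- equal heads
        subst hcd
        obtain ⟨h1, h2⟩ := firstocc heq (by simp [not_mem_pre]) (by simp [not_mem_pre, hu])
        have l1 := congrArg List.length h1
        simp only [List.length_append] at l1
        have hu0 : u = [] := List.length_eq_zero_iff.mp (by omega)
        subst hu0
        refine ⟨rfl, ?_⟩
        cases Z2 with
        | nil =>
          rw [scs_nil] at h2
          have l2 := congrArg List.length h2
          simp only [List.length_append] at l2
          rw [List.length_eq_zero_iff.mp (show Z1'.length = 0 by omega)]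
        | cons e Z2' =>
          have heq' : scs (suf c X) (suf c Y) Z1' = pre e (suf c X) ++ [] ++ pre e (suf c Y)
              ++ e :: scs (suf e (suf c X)) (suf e (suf c Y)) Z2' := by
            rw [h2, scs_cons]; simp
          have hres := ih (suf c X) (suf c Y) Z1' Z2' [] e hk'
            (sublist_suf h1x) (sublist_suf h1y) (sublist_suf h2x) (sublist_suf h2y)
            (by simp) heq'
          rw [hres.2]
      · by_cases hdpx : d ∈ pre c X
        · -- d occurs before c in X : mirror reduction
          have hPcX : pre c X = pre d (pre c X) ++ d :: suf d (pre c X) := pre_spec hdpx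
          set A := pre d (pre c X) with hAdef
          set B := suf d (pre c X) with hBdef
          have hcA : c ∉ A := fun h => not_mem_pre c X ((List.takeWhile_sublist _).subset h)
          have hcB : c ∉ B := fun h => not_mem_pre c X
            (((List.tail_sublist _).trans (List.dropWhile_sublist _)).subset h)
          have hdA : d ∉ A := not_mem_pre d _
          have hXdec : X = A ++ d :: (B ++ c :: suf c X) := by
            have h := pre_spec hcX
            rw [hPcX] at h
            simpa using h
          obtain ⟨hpreX, hsufX⟩ := pre_of_decomp hXdec hdA
          have key : A ++ d :: (B ++ (pre c Y ++ c :: scs (suf c X) (suf c Y) Z1'))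
              = (A ++ u ++ pre d Y) ++ d :: scs (suf d X) (suf d Y) Z2 := by
            calc A ++ d :: (B ++ (pre c Y ++ c :: scs (suf c X) (suf c Y) Z1'))
                = pre c X ++ pre c Y ++ c :: scs (suf c X) (suf c Y) Z1' := by
                  rw [hPcX]; simp
              _ = pre d X ++ u ++ pre d Y ++ d :: scs (suf d X) (suf d Y) Z2 := heq
              _ = _ := by rw [hpreX]
          obtain ⟨h1, h2⟩ := firstocc key hdA (by simp [not_mem_pre, hu, hdA])
          have l1 := congrArg List.length h1
          simp only [List.length_append] at l1
          have hu0 : u = [] := List.length_eq_zero_iff.mp (by omega)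
          have hpYnil : pre d Y = [] := List.length_eq_zero_iff.mp (by omega)
          have hYdec : Y = d :: suf d Y := by
            have h := pre_spec hdY
            rw [hpYnil] at h
            simpa using h
          have hdc : d ≠ c := fun e => hcd e.symm
          have hpcy : pre c Y = d :: pre c (suf d Y) := by
            conv_lhs => rw [hYdec]
            rw [pre_cons_ne hdc]
          have hscy : suf c Y = suf c (suf d Y) := by
            conv_lhs => rw [hYdec]
            rw [suf_cons_ne hdc]
          obtain ⟨hpreB, hsufB⟩ := pre_of_decomp hsufX hcB
          have heq' : scs (suf d X) (suf d Y) Z2 = pre c (suf d X) ++ [d] ++ pre c (suf d Y)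
              ++ c :: scs (suf c (suf d X)) (suf c (suf d Y)) Z1' := by
            rw [hpreB, hsufB, ← h2, hpcy, hscy]
            simp
          have hk2 : Z2.length ≤ k := by
            subst hu0; simp only [List.length_nil] at hleq ⊢; omega
          have hc1 : (c :: Z1').Sublist (suf d X) := by
            rw [hsufX]
            exact (((sublist_suf h1x).cons₂ c).trans (List.sublist_append_right B _))
          have hc2 : (c :: Z1').Sublist (suf d Y) := by
            have h := h1y
            rw [hYdec] at h
            exact cons_sublist_of_ne h hcd
          have hres := ih (suf d X) (suf d Y) Z2 Z1' [d] c hk2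
            (sublist_suf h2x) (sublist_suf h2y) hc1 hc2 (by simpa using hcd) heq'
          simp at hres
        · -- d not before c in X
          have hpreX : pre d X = pre c X ++ c :: pre d (suf c X) := by
            conv_lhs => rw [pre_spec hcX]
            rw [pre_append_of_notMem hdpx, pre_cons_ne hcd]
          by_cases hdpy : d ∈ pre c Y
          · -- d before c in Y : length contradiction
            have hPcY : pre c Y = pre d (pre c Y) ++ d :: suf d (pre c Y) := pre_spec hdpy
            set A := pre d (pre c Y) with hAdef
            set B := suf d (pre c Y) with hBdef
            have hdA : d ∉ A := not_mem_pre d _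
            have hYdec : Y = (pre c Y ) ++ c :: suf c Y := pre_spec hcY
            rw [hPcY] at hYdec
            have hYdec' : Y = A ++ d :: (B ++ c :: suf c Y) := by simpa using hYdec
            obtain ⟨hpreY, _⟩ := pre_of_decomp hYdec' hdA
            have key : (pre c X ++ A) ++ d :: (B ++ c :: scs (suf c X) (suf c Y) Z1')
                = (pre d X ++ u ++ A) ++ d :: scs (suf d X) (suf d Y) Z2 := by
              calc (pre c X ++ A) ++ d :: (B ++ c :: scs (suf c X) (suf c Y) Z1')
                  = pre c X ++ pre c Y ++ c :: scs (suf c X) (suf c Y) Z1' := by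
                    rw [hPcY]; simp
                _ = pre d X ++ u ++ pre d Y ++ d :: scs (suf d X) (suf d Y) Z2 := heq
                _ = _ := by rw [hpreY]
            obtain ⟨h1, _⟩ := firstocc key (by simp [hdpx, hdA]) (by simp [not_mem_pre, hu, hdA])
            have l1 := congrArg List.length h1
            rw [hpreX] at l1
            simp only [List.length_append, List.length_cons] at l1
            omega
          · -- d after c in both : straight reduction
            have hsufX : suf d X = suf d (suf c X) := by
              conv_lhs => rw [pre_spec hcX]
              rw [suf_append_of_notMem hdpx, suf_cons_ne hcd]
            have hpreY : pre d Y = pre c Y ++ c :: pre d (suf c Y) := by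
              conv_lhs => rw [pre_spec hcY]
              rw [pre_append_of_notMem hdpy, pre_cons_ne hcd]
            have hsufY : suf d Y = suf d (suf c Y) := by
              conv_lhs => rw [pre_spec hcY]
              rw [suf_append_of_notMem hdpy, suf_cons_ne hcd]
            have key : (pre c X ++ pre c Y) ++ c :: scs (suf c X) (suf c Y) Z1'
                = pre c X ++ c :: (pre d (suf c X) ++ (u ++ (pre d Y
                    ++ d :: scs (suf d X) (suf d Y) Z2))) := by
              calc (pre c X ++ pre c Y) ++ c :: scs (suf c X) (suf c Y) Z1'
                  = pre d X ++ u ++ pre d Y ++ d :: scs (suf d X) (suf d Y) Z2 := heq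
                _ = _ := by rw [hpreX]; simp
            obtain ⟨h1, h2⟩ := firstocc key (by simp [not_mem_pre]) (not_mem_pre c X)
            have l1 := congrArg List.length h1
            simp only [List.length_append] at l1
            have hpYnil : pre c Y = [] := List.length_eq_zero_iff.mp (by omega)
            have hYdec : Y = c :: suf c Y := by
              have h := pre_spec hcY
              rw [hpYnil] at h
              simpa using h
            have hpreY' : pre d Y = c :: pre d (suf c Y) := by rw [hpreY, hpYnil]; rfl
            have heq' : scs (suf c X) (suf c Y) Z1' = pre d (suf c X) ++ (u ++ [c])
                ++ pre d (suf c Y)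
                ++ d :: scs (suf d (suf c X)) (suf d (suf c Y)) Z2 := by
              rw [h2, hpreY', hsufX, hsufY]
              simp
            have hdc : d ≠ c := fun e => hcd e.symm
            have hc1 : (d :: Z2).Sublist (suf c X) := by
              have h := h2x
              rw [pre_spec hcX] at h
              exact cons_sublist_of_ne (sublist_of_notMem_left h hdpx) hdc
            have hc2 : (d :: Z2).Sublist (suf c Y) := by
              have h := h2y
              rw [hYdec] at h
              exact cons_sublist_of_ne h hdc
            have hu' : d ∉ u ++ [c] := by
              simp only [List.mem_append, List.mem_singleton]
              rintro (h | h)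
              · exact hu h
              · exact hdc h
            have hres := ih (suf c X) (suf c Y) Z1' Z2 (u ++ [c]) d hk'
              (sublist_suf h1x) (sublist_suf h1y) hc1 hc2 hu' heq'
            simp at hres

end SCSAux

theorem stmt_12 (q n t N : ℕ) (C : Set (List (Fin q)))
    (hlen : ∀ x ∈ C, x.length = n)
    (hI : ∀ x ∈ C, ∀ y ∈ C, x ≠ y → (iBall t x ∩ iBall t y).ncard < N) :
    ∀ x ∈ C, ∀ y ∈ C, x ≠ y → (dBall t x ∩ dBall t y).ncard < N := by
  intro x hx y hy hxy
  have hfin : (iBall t x ∩ iBall t y).Finite := by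
    have hsub : (iBall t x ∩ iBall t y) ⊆ {l : List (Fin q) | l.length = x.length + t} :=
      fun w hw => hw.1.2
    exact (List.finite_length_eq (Fin q) (x.length + t)).subset hsub
  have hmap : ∀ z ∈ dBall t x ∩ dBall t y, SCSAux.scs x y z ∈ iBall t x ∩ iBall t y := by
    rintro z ⟨⟨hzx, hlx⟩, ⟨hzy, hly⟩⟩
    obtain ⟨h1, h2⟩ := SCSAux.sublist_scs hzx hzy
    have hl := SCSAux.scs_length hzx hzy
    have hxn := hlen x hx
    have hyn := hlen y hy
    exact ⟨⟨h1, by omega⟩, ⟨h2, by omega⟩⟩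
  have hinj : Set.InjOn (SCSAux.scs x y) (dBall t x ∩ dBall t y) := by
    rintro z1 ⟨⟨h1x, hl1⟩, ⟨h1y, _⟩⟩ z2 ⟨⟨h2x, hl2⟩, ⟨h2y, _⟩⟩ heq
    cases z2 with
    | nil =>
      rw [SCSAux.scs_nil] at heq
      have h := SCSAux.scs_length h1x h1y
      have h' := congrArg List.length heq
      simp only [List.length_append] at h'
      exact List.length_eq_zero_iff.mp (by omega)
    | cons d Z2 =>
      exact (SCSAux.master z1.length x y z1 Z2 [] d le_rfl h1x h1y h2x h2y (by simp)
        (by rw [heq, SCSAux.scs_cons]; simp)).2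
  calc (dBall t x ∩ dBall t y).ncard ≤ (iBall t x ∩ iBall t y).ncard :=
        Set.ncard_le_ncard_of_injOn _ hmap hinj hfin
    _ < N := hI x hx y hy hxy
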